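/- Let R be a ring, S a set, and {e_s}_{s∈S} pairwise orthogonal idempotents in R. Set Ψ(s) = 1 − e_s. Then for every ring map f : R → R', the base change Ψ_{R,S} ⊗_R R' equals (f∘Ψ)_{R',S}; in particular Ψ_{R,S} is universally injective (its cokernel is R-flat). -/

import Mathlib

/-- The `R`-linear map `Ψ_{R,S} : ⊕_S R → R ⊕ (⊕_S R)` associated to a function `Ψ : S → R`,
sending the basis vector `1_s` to `(1, Ψ s • 1_s)`. -/
noncomputable def psiMap (R : Type*) [CommRing R] (S : Type*) (Ψ : S → R) :
    (S →₀ R) →ₗ[R] R × (S →₀ R) :=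
  Finsupp.lsum R fun s => LinearMap.prod LinearMap.id ((Ψ s) • Finsupp.lsingle s)

open TensorProduct LinearMap Function

section
variable {R : Type*} [CommRing R] {S : Type*}

/-- module version of psiMap -/
noncomputable def phiMap (e : S → R) (N : Type*) [AddCommGroup N] [Module R N] :
    (S →₀ N) →ₗ[R] N × (S →₀ N) :=
  Finsupp.lsum R fun s => LinearMap.prod LinearMap.id ((1 - e s) • Finsupp.lsingle s)

lemma phiMap_apply (e : S → R) {N : Type*} [AddCommGroup N] [Module R N] (g : S →₀ N) :
    phiMap e N g = (g.sum fun _ n => n, g.sum fun s n => Finsupp.single s ((1 - e s) • n)) := by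
  classical
  rw [phiMap, Finsupp.lsum_apply]
  rw [Prod.ext_iff]
  constructor
  · simp [Finsupp.sum, Prod.fst_sum]
  · simp [Finsupp.sum, Prod.snd_sum]

lemma phiMap_injective (e : S → R) (hidem : ∀ s, e s * e s = e s)
    (horth : ∀ s t, s ≠ t → e s * e t = 0)
    (N : Type*) [AddCommGroup N] [Module R N] : Function.Injective (phiMap e N) := by
  classical
  rw [injective_iff_map_eq_zero]
  intro g hg
  rw [phiMap_apply, show (0 : N × (S →₀ N)) = (0, 0) from rfl, Prod.mk.injEq] at hg
  obtain ⟨h1, h2⟩ := hg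
  have key' : ∀ t, g t = e t • g t := by
    intro t
    by_cases h : g t = 0
    · rw [h, smul_zero]
    · have := congrArg (fun h => h t) h2
      simp only [Finsupp.sum_apply, Finsupp.coe_zero, Pi.zero_apply,
        Finsupp.finset_sum_apply, Finsupp.single_apply, Finsupp.sum] at this
      rw [Finset.sum_ite_eq' g.support t, if_pos (Finsupp.mem_support_iff.mpr h),
        sub_smul, one_smul, sub_eq_zero] at this
      exact this
  ext t
  have h3 : e t • (g.sum fun _ n => n) = e t • g t := by
    rw [Finsupp.sum, Finset.smul_sum]
    by_cases ht : t ∈ g.support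
    · exact Finset.sum_eq_single_of_mem t ht (fun s _ hst => by
        rw [key' s, smul_smul, horth t s (Ne.symm hst), zero_smul])
    · rw [Finsupp.notMem_support_iff.mp ht, smul_zero]
      exact Finset.sum_eq_zero (fun s hs => by
        rw [key' s, smul_smul, horth t s (fun h => ht (h ▸ hs)), zero_smul])
  rw [Finsupp.coe_zero, Pi.zero_apply, key' t, ← h3, h1, smul_zero]

end

section
variable {R : Type*} [CommRing R] {S : Type*} [DecidableEq S]

/-- Identification of the base-changed psiMap with phiMap. -/
lemma lTensor_psiMap_eq (e : S → R) (N : Type*) [AddCommGroup N] [Module R N] :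
    ((TensorProduct.rid R N).prodCongr (TensorProduct.finsuppScalarRight R R N S)).toLinearMap ∘ₗ
        (TensorProduct.prodRight R R N R (S →₀ R)).toLinearMap ∘ₗ
        lTensor N (psiMap R S fun s => 1 - e s) =
      (phiMap e N) ∘ₗ (TensorProduct.finsuppScalarRight R R N S).toLinearMap := by
  apply TensorProduct.ext'
  intro n x
  induction x using Finsupp.induction_linear with
  | zero => simp
  | add a b ha hb => rw [tmul_add, map_add, map_add, ha, hb]
  | single s r =>
    simp [psiMap, phiMap, Finsupp.lsum_single, TensorProduct.tmul_smul,
      TensorProduct.finsuppScalarRight_apply_tmul, Finsupp.sum_single_index,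
      TensorProduct.smul_tmul', smul_smul, mul_comm]
    have hmul : (Finsupp.single s r : S →₀ R) * ((Finsupp.single s 1) - Finsupp.single s (e s)) =
        Finsupp.single s (r * (1 - e s)) := by
      ext t
      by_cases h : s = t <;>
        simp [Finsupp.mul_apply, Finsupp.single_apply, h, mul_sub]
    rw [hmul, Finsupp.sum_single_index (by simp)]

end

section chase
universe u v

variable {R : Type u} [CommRing R] {F G M : Type v}
  [AddCommGroup F] [AddCommGroup G] [AddCommGroup M]
  [Module R F] [Module R G] [Module R M] [Module.Flat R G]

/-- If `F → G → M → 0` is exact with `G` flat and `F → G` universally injective,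
then `M` is flat. -/
lemma flat_of_universally_injective (Ψ : F →ₗ[R] G) (π : G →ₗ[R] M)
    (hexact : Function.Exact Ψ π) (hsurj : Function.Surjective π)
    (h : ∀ (N : Type u) [AddCommGroup N] [Module R N], Function.Injective (lTensor N Ψ)) :
    Module.Flat R M := by
  rw [Module.Flat.iff_rTensor_injective']
  intro I
  rw [injective_iff_map_eq_zero]
  intro x hx
  obtain ⟨y, rfl⟩ := lTensor_surjective (↥I) hsurj x
  -- push into R ⊗ G
  have hcomm1 : rTensor M I.subtype ∘ₗ lTensor (↥I) π = lTensor R π ∘ₗ rTensor G I.subtype := by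
    rw [rTensor_comp_lTensor, lTensor_comp_rTensor]
  have hx' : lTensor R π (rTensor G I.subtype y) = 0 := by
    rw [← LinearMap.comp_apply, ← hcomm1, LinearMap.comp_apply, hx]
  -- exactness of R-row
  obtain ⟨z, hz⟩ := (lTensor_exact R hexact hsurj _).mp hx'
  -- push z to (R ⧸ I) ⊗ F
  have hcol : I.mkQ ∘ₗ I.subtype = 0 := by
    ext a
    exact Ideal.Quotient.eq_zero_iff_mem.mpr a.2
  have hq : lTensor (R ⧸ I) Ψ (rTensor F I.mkQ z) = 0 := by
    have : rTensor G I.mkQ (lTensor R Ψ z) = lTensor (R ⧸ I) Ψ (rTensor F I.mkQ z) := by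
      rw [← LinearMap.comp_apply, rTensor_comp_lTensor, ← lTensor_comp_rTensor,
        LinearMap.comp_apply]
    rw [← this, hz, ← LinearMap.comp_apply, ← rTensor_comp, hcol, rTensor_zero,
      LinearMap.zero_apply]
  have hz0 : rTensor F I.mkQ z = 0 := by
    have := h (R ⧸ I)
    rw [injective_iff_map_eq_zero] at this
    exact this _ hq
  -- column exactness for F
  obtain ⟨w, hw⟩ := (rTensor_exact F (LinearMap.exact_subtype_mkQ I)
    (Submodule.mkQ_surjective I) z).mp hz0
  -- compare in R ⊗ G
  have hyw : lTensor (↥I) Ψ w = y := by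
    apply Module.Flat.rTensor_preserves_injective_linearMap (M := G) I.subtype
      Subtype.val_injective
    rw [← LinearMap.comp_apply, rTensor_comp_lTensor, ← lTensor_comp_rTensor,
      LinearMap.comp_apply, hw, hz]
  rw [← hyw, ← LinearMap.comp_apply, ← lTensor_comp, hexact.linearMap_comp_eq_zero,
    lTensor_zero, LinearMap.zero_apply]

end chase

/-- Let `{e s}` be pairwise orthogonal idempotents of `R` and `Ψ s = 1 - e s`.
Then `Ψ_{R,S}` is universally injective: its cokernel is `R`-flat, and for every ring map
`f : R → R'` the base change — which equals `(f ∘ Ψ)_{R',S}` — is injective. -/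
theorem stmt5 (R : Type*) [CommRing R] (S : Type*) (e : S → R)
    (hidem : ∀ s, e s * e s = e s)
    (horth : ∀ s t, s ≠ t → e s * e t = 0) :
    Module.Flat R ((R × (S →₀ R)) ⧸ LinearMap.range (psiMap R S (fun s => 1 - e s))) ∧
    ∀ (R' : Type*) [CommRing R'] (f : R →+* R'),
      Function.Injective (psiMap R' S (fun s => f (1 - e s))) := by
  classical
  constructor
  · refine flat_of_universally_injective (psiMap R S (fun s => 1 - e s))
      (LinearMap.range (psiMap R S (fun s => 1 - e s))).mkQ
      (LinearMap.exact_map_mkQ_range _) (Submodule.mkQ_surjective _) ?_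
    intro N _ _
    have hid := lTensor_psiMap_eq e N
    have hinj : Function.Injective
        ⇑((phiMap e N) ∘ₗ (TensorProduct.finsuppScalarRight R R N S).toLinearMap) := by
      rw [LinearMap.coe_comp]
      exact (phiMap_injective e hidem horth N).comp (LinearEquiv.injective _)
    rw [← hid] at hinj
    simp only [LinearMap.coe_comp] at hinj
    exact hinj.of_comp.of_comp
  · intro R' _ f
    have he : (fun s => f (1 - e s)) = fun s => 1 - f (e s) := by
      funext s; simp
    rw [he]
    exact phiMap_injective (fun s => f (e s))
      (fun s => by rw [← map_mul, hidem])
      (fun s t hst => by rw [← map_mul, horth s t hst, map_zero]) R'
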